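/- Let R be a commutative domain in which 2 ≠ 0, and let a, b, c, d, e, w₁, w₂ ∈ R satisfy 2w₁ = c − ae, 2w₂ = c + ae, and c² − 4d = e²(a² − 4b). Set f = x² − ax + b, g = y² − cy + d, h₁ = y − ex − w₁, and h₂ = y + ex − w₂ in R[x,y]. Then w₁·w₂ = d − e²b, the polynomial identity h₁·h₂ = g − e²·f holds in R[x,y], and the quotient R[x,y]/(f, g, h₁) is isomorphic as an R-algebra to R[x]/(f). -/

import Mathlib

open MvPolynomial

noncomputable section

/-- The ideal `(f, g, h₁) = (x² − ax + b, y² − cy + d, y − ex − w₁)` in `R[x,y]`. -/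
abbrev fgh₁Ideal (R : Type) [CommRing R] (a b c d e w₁ : R) :
    Ideal (MvPolynomial (Fin 2) R) :=
  Ideal.span {(X 0 : MvPolynomial (Fin 2) R) ^ 2 - C a * X 0 + C b,
    (X 1 : MvPolynomial (Fin 2) R) ^ 2 - C c * X 1 + C d,
    (X 1 : MvPolynomial (Fin 2) R) - C e * X 0 - C w₁}

/-- Let `R` be a domain with `2 ≠ 0` and let `a, b, c, d, e, w₁, w₂ ∈ R` satisfy
`2w₁ = c − ae`, `2w₂ = c + ae` and `c² − 4d = e²(a² − 4b)`.  With
`f = x² − ax + b`, `g = y² − cy + d`, `h₁ = y − ex − w₁`, `h₂ = y + ex − w₂` in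
`R[x,y]`, one has `w₁w₂ = d − e²b`, the identity `h₁h₂ = g − e²f`, and
`R[x,y]/(f, g, h₁) ≅ R[x]/(f)` as `R`-algebras. -/
theorem stmt11 (R : Type) [CommRing R] [IsDomain R] (h2 : (2 : R) ≠ 0)
    (a b c d e w₁ w₂ : R)
    (hw₁ : 2 * w₁ = c - a * e) (hw₂ : 2 * w₂ = c + a * e)
    (he : c ^ 2 - 4 * d = e ^ 2 * (a ^ 2 - 4 * b)) :
    w₁ * w₂ = d - e ^ 2 * b ∧
    ((X 1 : MvPolynomial (Fin 2) R) - C e * X 0 - C w₁) *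
        ((X 1 : MvPolynomial (Fin 2) R) + C e * X 0 - C w₂) =
      ((X 1 : MvPolynomial (Fin 2) R) ^ 2 - C c * X 1 + C d) -
        C (e ^ 2) * ((X 0 : MvPolynomial (Fin 2) R) ^ 2 - C a * X 0 + C b) ∧
    Nonempty ((MvPolynomial (Fin 2) R ⧸ fgh₁Ideal R a b c d e w₁) ≃ₐ[R]
      AdjoinRoot (Polynomial.X ^ 2 - Polynomial.C a * Polynomial.X +
        Polynomial.C b : Polynomial R)) := by
  have h4 : (4 : R) ≠ 0 := by
    have := mul_ne_zero h2 h2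
    norm_num at this ⊢; exact this
  -- basic consequences in R
  have hsum : w₁ + w₂ = c := by
    apply mul_left_cancel₀ h2; linear_combination hw₁ + hw₂
  have hdiff : w₂ - w₁ = a * e := by
    apply mul_left_cancel₀ h2; linear_combination hw₂ - hw₁
  have hprod : w₁ * w₂ = d - e ^ 2 * b := by
    apply mul_left_cancel₀ h4
    linear_combination (2 * w₂) * hw₁ + (c - a * e) * hw₂ + he
  have hid : ((X 1 : MvPolynomial (Fin 2) R) - C e * X 0 - C w₁) *
        ((X 1 : MvPolynomial (Fin 2) R) + C e * X 0 - C w₂) =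
      ((X 1 : MvPolynomial (Fin 2) R) ^ 2 - C c * X 1 + C d) -
        C (e ^ 2) * ((X 0 : MvPolynomial (Fin 2) R) ^ 2 - C a * X 0 + C b) := by
    rw [map_pow]
    have h1 : (C w₁ : MvPolynomial (Fin 2) R) + C w₂ = C c := by
      rw [← map_add]; exact congrArg C hsum
    have h2' : (C w₂ : MvPolynomial (Fin 2) R) - C w₁ = C a * C e := by
      rw [← map_sub, ← map_mul]; exact congrArg C hdiff
    have h3 : (C w₁ : MvPolynomial (Fin 2) R) * C w₂ = C d - C e ^ 2 * C b := by
      rw [← map_mul, ← map_pow, ← map_mul, ← map_sub]; exact congrArg C hprod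
    linear_combination (-(X 1 : MvPolynomial (Fin 2) R)) * h1 + (C e * X 0) * h2' + h3
  refine ⟨hprod, hid, ?_⟩
  set fp : Polynomial R := Polynomial.X ^ 2 - Polynomial.C a * Polynomial.X + Polynomial.C b with hfp
  set I := fgh₁Ideal R a b c d e w₁ with hI
  set r := AdjoinRoot.root fp with hr
  set φ : MvPolynomial (Fin 2) R →ₐ[R] AdjoinRoot fp :=
    aeval ![r, algebraMap R (AdjoinRoot fp) e * r + algebraMap R (AdjoinRoot fp) w₁] with hφ
  have hφf : φ ((X 0 : MvPolynomial (Fin 2) R) ^ 2 - C a * X 0 + C b) = 0 := by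
    have h0 : (Polynomial.aeval r) fp = 0 := by
      rw [AdjoinRoot.aeval_eq, AdjoinRoot.mk_self]
    simp only [hfp, map_add, map_sub, map_mul, map_pow, Polynomial.aeval_X,
      Polynomial.aeval_C] at h0
    simp only [hφ, map_add, map_sub, map_mul, map_pow, aeval_X, aeval_C,
      Matrix.cons_val_zero]
    exact h0
  have hφh : φ ((X 1 : MvPolynomial (Fin 2) R) - C e * X 0 - C w₁) = 0 := by
    simp only [hφ, map_add, map_sub, map_mul, map_pow, aeval_X, aeval_C,
      Matrix.cons_val_zero, Matrix.cons_val_one, Matrix.head_cons]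
    ring
  have hφg : φ ((X 1 : MvPolynomial (Fin 2) R) ^ 2 - C c * X 1 + C d) = 0 := by
    have h := congrArg φ hid
    rw [map_mul φ ((X 1 : MvPolynomial (Fin 2) R) - C e * X 0 - C w₁) _, hφh, zero_mul,
      map_sub φ ((X 1 : MvPolynomial (Fin 2) R) ^ 2 - C c * X 1 + C d) _,
      map_mul φ (C (e ^ 2)) _, hφf, mul_zero, sub_zero] at h
    exact h.symm
  have hker : ∀ p ∈ I, φ p = 0 := by
    have hle : I ≤ RingHom.ker φ.toRingHom := by
      refine Ideal.span_le.mpr ?_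
      rintro q hq
      simp only [Set.mem_insert_iff, Set.mem_singleton_iff] at hq
      rcases hq with rfl | rfl | rfl
      · exact RingHom.mem_ker.mpr hφf
      · exact RingHom.mem_ker.mpr hφg
      · exact RingHom.mem_ker.mpr hφh
    intro p hp
    exact RingHom.mem_ker.mp (hle hp)
  set φ' : (MvPolynomial (Fin 2) R ⧸ I) →ₐ[R] AdjoinRoot fp :=
    Ideal.Quotient.liftₐ I φ hker with hφ'
  have hX0 : (Polynomial.aeval (Ideal.Quotient.mk I (X 0))) fp = 0 := by
    have hmem : ((X 0 : MvPolynomial (Fin 2) R) ^ 2 - C a * X 0 + C b) ∈ I :=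
      Ideal.subset_span (by simp)
    have h0 : Ideal.Quotient.mk I ((X 0 : MvPolynomial (Fin 2) R) ^ 2 - C a * X 0 + C b) = 0 :=
      Ideal.Quotient.eq_zero_iff_mem.mpr hmem
    simp only [hfp, map_add, map_sub, map_mul, map_pow, Polynomial.aeval_X, Polynomial.aeval_C]
    simp only [map_add, map_sub, map_mul, map_pow] at h0
    convert h0 using 3
    rfl
    rfl
  set ψ : AdjoinRoot fp →ₐ[R] (MvPolynomial (Fin 2) R ⧸ I) :=
    AdjoinRoot.liftAlgHom fp (Algebra.ofId R _) (Ideal.Quotient.mk I (X 0))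
      (by rw [Algebra.toRingHom_ofId, ← Polynomial.aeval_def]; exact hX0) with hψ
  have hφ'mk : ∀ p, φ' (Ideal.Quotient.mk I p) = φ p := fun p => rfl
  refine ⟨AlgEquiv.ofAlgHom φ' ψ ?_ ?_⟩
  · apply AdjoinRoot.algHom_ext
    simp [hψ, hφ'mk, hφ, hr, AdjoinRoot.liftAlgHom_root]
  · apply Ideal.Quotient.algHom_ext
    apply MvPolynomial.algHom_ext
    intro i
    fin_cases i
    · simp [hψ, hφ'mk, hφ, hr, AdjoinRoot.liftAlgHom_root]
    · have halg : ∀ x : R, algebraMap R (MvPolynomial (Fin 2) R ⧸ I) x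
          = Ideal.Quotient.mk I (C x) := fun x => rfl
      simp only [AlgHom.comp_apply, Ideal.Quotient.mkₐ_eq_mk, hφ'mk, Ideal.Quotient.liftₐ_apply,
        Ideal.Quotient.lift_mk, hφ, AlgHom.coe_toRingHom, aeval_X, Matrix.cons_val_one,
        Matrix.head_cons, Matrix.cons_val_zero, Fin.mk_one, Fin.isValue, map_add, map_mul, AlgHom.commutes, hψ, hr, AdjoinRoot.liftAlgHom_root,
        AlgHom.id_apply]
      rw [halg, halg]
      rw [← map_mul, ← map_add]
      rw [Ideal.Quotient.eq]
      have hmem : ((X 1 : MvPolynomial (Fin 2) R) - C e * X 0 - C w₁) ∈ I :=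
        Ideal.subset_span (by simp)
      have heq : (C e * X 0 + C w₁ : MvPolynomial (Fin 2) R) - X 1
          = -(X 1 - C e * X 0 - C w₁) := by ring
      rw [heq]
      exact neg_mem hmem
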